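/- Every positive (10,4)-reverse multiple M satisfies M ≡ 78 (mod 100), and its big-endian decimal expansion begins with the digits 2, 1; that is, the two most significant decimal digits of M are 2 and 1 and the two least significant digits are 7 and 8. -/

import Mathlib

lemma stmt_14_aux : ∀ c < 100, 10 ≤ (4*c/10)%10 + 10*(4*c%10) →
    4*((4*c/10)%10 + 10*(4*c%10)) ≤ c/10%10 + 10*(c%10) →
    c/10%10 + 10*(c%10) ≤ 4*((4*c/10)%10 + 10*(4*c%10)) + 3 → c = 78 := by decide

lemma stmt_14_c1 (N : ℕ) : 4*N % 10 = 4*(N%100) % 10 := by omega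

lemma stmt_14_c2 (N : ℕ) : 4*N/10 % 10 = (4*(N%100))/10 % 10 := by
  have hM' : 4*N = 10*(40*(N/100)) + 4*(N%100) := by omega
  rw [hM', Nat.mul_add_div (by norm_num)]
  omega

lemma stmt_14_c3 (N : ℕ) : N/10 % 10 = (N%100)/10 % 10 := by omega

lemma stmt_14_c4 (N : ℕ) : N % 10 = (N%100) % 10 := by omega

lemma stmt_14_c5 (N : ℕ) (h : N % 100 = 78) : 4*N % 10 = 2 ∧ 4*N/10 % 10 = 1 := by
  refine ⟨by omega, ?_⟩
  rw [stmt_14_c2]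
  omega

/-- Every positive `(10, 4)`-reverse multiple `M` satisfies `M ≡ 78 [MOD 100]`, and its
big-endian decimal expansion begins with the digits `2, 1`. -/
theorem stmt_14 (M : ℕ) (hM : 0 < M)
    (hrev : (Nat.digits 10 M).reverse = Nat.digits 10 (4 * M)) :
    M % 100 = 78 ∧ ((Nat.digits 10 M).reverse).take 2 = [2, 1] := by
  have h10 : (1:ℕ) < 10 := by norm_num
  rcases hL : Nat.digits 10 M with _ | ⟨a, _ | ⟨b, T⟩⟩
  · exact absurd (Nat.digits_eq_nil_iff_eq_zero.mp hL) (by omega)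
  · -- single digit case: 4*M = M, contradiction
    exfalso
    have h4 : (4:ℕ) * M = Nat.ofDigits 10 (Nat.digits 10 (4*M)) :=
      (Nat.ofDigits_digits 10 (4*M)).symm
    rw [← hrev, hL] at h4
    have hMa : M = Nat.ofDigits 10 [a] := by
      rw [← hL, Nat.ofDigits_digits]
    simp [Nat.ofDigits] at h4 hMa
    omega
  · rw [hL] at hrev
    -- basic bounds from length ≥ 2
    have hpowle := Nat.base_pow_length_digits_le 10 M h10 (by omega)
    rw [hL] at hpowle
    have hM10 : 10 ≤ M := by
      have h1 : (10:ℕ)^2 ≤ 10 ^ (a :: b :: T).length := by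
        apply Nat.pow_le_pow_right <;> simp
      have := le_trans h1 hpowle
      norm_num at this; omega
    -- identify a, b
    have hdef1 : Nat.digits 10 M = M % 10 :: Nat.digits 10 (M/10) :=
      Nat.digits_def' h10 hM
    have hdef2 : Nat.digits 10 (M/10) = (M/10) % 10 :: Nat.digits 10 (M/10/10) :=
      Nat.digits_def' h10 (by omega)
    rw [hL, hdef2] at hdef1
    have ha : a = M % 10 := by injection hdef1
    have hbT : b :: T = (M/10) % 10 :: Nat.digits 10 (M/10/10) := by injection hdef1
    have hb : b = (M/10) % 10 := by injection hbT
    have hT : T = Nat.digits 10 (M/10/10) := by injection hbT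
    -- identify digits of 4*M
    have h4def1 : Nat.digits 10 (4*M) = (4*M) % 10 :: Nat.digits 10 (4*M/10) :=
      Nat.digits_def' h10 (by omega)
    have h4def2 : Nat.digits 10 (4*M/10) = (4*M/10) % 10 :: Nat.digits 10 (4*M/10/10) :=
      Nat.digits_def' h10 (by omega)
    set e0 := (4*M) % 10 with he0
    set e1 := (4*M/10) % 10 with he1
    set T4 := Nat.digits 10 (4*M/10/10) with hT4
    rw [h4def2] at h4def1
    have hrev2 : (a :: b :: T).reverse = e0 :: e1 :: T4 := by rw [hrev, h4def1]
    -- lengths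
    have hlen : T4.length = T.length := by
      have := congrArg List.length hrev2
      simp at this; omega
    set k := T.length with hk
    -- digit bounds for lists
    have hTlt : ∀ x ∈ T, x < 10 := by
      intro x hx
      exact Nat.digits_lt_base h10 (by rw [hT] at hx; exact hx)
    have hT4lt : ∀ x ∈ T4, x < 10 := by
      intro x hx
      exact Nat.digits_lt_base h10 hx
    -- M in terms of e0, e1
    have hMsplit : a :: b :: T = T4.reverse ++ [e1, e0] := by
      have := congrArg List.reverse hrev2
      simpa using this
    have hMval : M = Nat.ofDigits 10 (T4.reverse ++ [e1, e0]) := by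
      conv_lhs => rw [← Nat.ofDigits_digits 10 M, hL, hMsplit]
    rw [Nat.ofDigits_append] at hMval
    have hr1lt : Nat.ofDigits 10 T4.reverse < 10 ^ k := by
      have := Nat.ofDigits_lt_base_pow_length h10 (l := T4.reverse)
        (by intro x hx; exact hT4lt x (List.mem_reverse.mp hx))
      simpa [hlen] using this
    have hMval' : M = Nat.ofDigits 10 T4.reverse + 10 ^ k * (e1 + 10 * e0) := by
      rw [hMval]
      simp [Nat.ofDigits, hlen]
    have hA : M / 10 ^ k = e1 + 10 * e0 := by
      rw [hMval', Nat.add_mul_div_left _ _ (Nat.pow_pos (n := k) (by norm_num)),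
        Nat.div_eq_of_lt hr1lt]
      omega
    -- 4*M in terms of a, b
    have h4split : Nat.digits 10 (4*M) = T.reverse ++ [b, a] := by
      rw [← hrev]; simp
    have h4val : 4*M = Nat.ofDigits 10 (T.reverse ++ [b, a]) := by
      conv_lhs => rw [← Nat.ofDigits_digits 10 (4*M), h4split]
    rw [Nat.ofDigits_append] at h4val
    have hr2lt : Nat.ofDigits 10 T.reverse < 10 ^ k := by
      have := Nat.ofDigits_lt_base_pow_length h10 (l := T.reverse)
        (by intro x hx; exact hTlt x (List.mem_reverse.mp hx))
      simpa using this
    have h4val' : 4*M = Nat.ofDigits 10 T.reverse + 10 ^ k * (b + 10 * a) := by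
      rw [h4val]
      simp [Nat.ofDigits, hk]
    have hB : 4*M / 10 ^ k = b + 10 * a := by
      rw [h4val', Nat.add_mul_div_left _ _ (Nat.pow_pos (n := k) (by norm_num)),
        Nat.div_eq_of_lt hr2lt]
      omega
    -- bounds on A and B
    have hkpos : (0:ℕ) < 10 ^ k := Nat.pow_pos (n := k) (by norm_num)
    have hAge : 10 ≤ M / 10 ^ k := by
      have h1 : (10:ℕ)^(k+1) ≤ M := by
        have h2 : (10:ℕ)^(k+2) ≤ 10 * M := by
          simpa using hpowle
        have : (10:ℕ)^(k+2) = 10 * 10^(k+1) := by ring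
        omega
      rw [Nat.le_div_iff_mul_le hkpos]
      calc 10 * 10 ^ k = 10 ^ (k+1) := by ring
        _ ≤ M := h1
    have hBle : 4*M / 10 ^ k ≤ 4 * (M / 10 ^ k) + 3 := by
      rw [Nat.div_le_iff_le_mul_add_pred hkpos]
      have hmod := Nat.div_add_mod M (10 ^ k)
      have hmodlt : M % 10 ^ k < 10 ^ k := Nat.mod_lt _ hkpos
      have hring : 10 ^ k * (4 * (M / 10 ^ k) + 3) =
          4 * (10 ^ k * (M / 10 ^ k)) + 3 * 10 ^ k := by ring
      have hring2 : (4 * (M / 10 ^ k) + 3) * 10 ^ k =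
          4 * (10 ^ k * (M / 10 ^ k)) + 3 * 10 ^ k := by ring
      omega
    have hBge : 4 * (M / 10 ^ k) ≤ 4*M / 10 ^ k := by
      rw [Nat.le_div_iff_mul_le hkpos]
      have hmod := Nat.div_add_mod M (10 ^ k)
      have hring : 4 * (M / 10 ^ k) * 10 ^ k = 4 * (10 ^ k * (M / 10 ^ k)) := by ring
      omega
    -- transfer to M % 100
    rw [hA] at hAge hBle hBge
    rw [hB] at hBle hBge
    rw [ha, hb] at hBle hBge
    rw [he0, he1] at hAge hBle hBge
    rw [stmt_14_c1 M, stmt_14_c2 M] at hAge hBle hBge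
    rw [stmt_14_c3 M, stmt_14_c4 M] at hBle hBge
    have hmod100 : M % 100 = 78 :=
      stmt_14_aux (M % 100) (Nat.mod_lt _ (by norm_num)) hAge hBge hBle
    refine ⟨hmod100, ?_⟩
    rw [hrev2]
    obtain ⟨h2, h1⟩ := stmt_14_c5 M hmod100
    rw [he0, he1] at *
    simp [h1, h2]
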